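/- arXiv:1909.11940 — 2 statements merged into one kernel-verified Lean document; each statement's English description precedes it below -/
import Mathlib

section
/- Let N' ∈ ℝ^{s×m} with ker(N') = ker(N) for N ∈ ℝ^{n×m} of rank s, let W ∈ ℝ^{d×n} (d = n-s) have rows forming a basis of the left kernel of N, and let K: Ω → ℝ^m be C¹ on open Ω ⊆ ℝⁿ. Define f(x) = N K(x) and Φ(x) = (N'K(x), Wx - T). Then for x* ∈ Ω, ker(J_f(x*)) ∩ im(N) = {0} if and only if det(J_Φ(x*)) ≠ 0. -/
open Matrix

lemma aux_det_ne_zero_iff_ker {V : Type*} [AddCommGroup V] [Module ℝ V]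
    [FiniteDimensional ℝ V] (g : V →ₗ[ℝ] V) :
    LinearMap.det g ≠ 0 ↔ LinearMap.ker g = ⊥ := by
  classical
  constructor
  · intro h
    let b := Module.finBasis ℝ V
    have hd : IsUnit ((LinearMap.toMatrix b b g).det) := by
      rwa [LinearMap.det_toMatrix, isUnit_iff_ne_zero]
    have := Matrix.ker_toLin_eq_bot b (LinearMap.toMatrix b b g) hd
    rwa [Matrix.toLin_toMatrix] at this
  · intro h
    have : IsUnit g := (LinearMap.isUnit_iff_ker_eq_bot g).2 h
    exact isUnit_iff_ne_zero.1 (LinearMap.isUnit_det g this)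

lemma aux_sum_elim_eq_zero {s d : ℕ} (u : Fin s → ℝ) (v : Fin d → ℝ) :
    Sum.elim u v = 0 ↔ u = 0 ∧ v = 0 := by
  constructor
  · intro h
    constructor
    · funext j; exact congrFun h (Sum.inl j)
    · funext j; exact congrFun h (Sum.inr j)
  · rintro ⟨hu, hv⟩
    subst hu; subst hv
    funext i; cases i <;> rfl

theorem stmt11 {n m s d : ℕ} (hn : s + d = n)
    (N : Matrix (Fin n) (Fin m) ℝ) (hNrank : N.rank = s)
    (N' : Matrix (Fin s) (Fin m) ℝ)
    (hker : LinearMap.ker N'.mulVecLin = LinearMap.ker N.mulVecLin)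
    (W : Matrix (Fin d) (Fin n) ℝ)
    (hWli : LinearIndependent ℝ (fun i : Fin d => W i))
    (hWspan : ∀ w : Fin n → ℝ,
      w ᵥ* N = 0 ↔ w ∈ Submodule.span ℝ (Set.range fun i : Fin d => W i))
    (Ω : Set (Fin n → ℝ)) (hΩ : IsOpen Ω)
    (K : (Fin n → ℝ) → (Fin m → ℝ)) (hK : ContDiffOn ℝ 1 K Ω)
    (T : Fin d → ℝ)
    (f : (Fin n → ℝ) → (Fin n → ℝ)) (hf : f = fun x => N *ᵥ K x)
    (Φ : (Fin n → ℝ) → (Fin s ⊕ Fin d → ℝ))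
    (hΦ : Φ = fun x => Sum.elim (N' *ᵥ K x) (W *ᵥ x - T))
    (xstar : Fin n → ℝ) (hx : xstar ∈ Ω) :
    (LinearMap.ker (fderiv ℝ f xstar : (Fin n → ℝ) →ₗ[ℝ] (Fin n → ℝ)) ⊓
        LinearMap.range N.mulVecLin = ⊥) ↔
    LinearMap.det
      ((LinearEquiv.funCongrLeft ℝ ℝ
          ((finCongr hn.symm).trans finSumFinEquiv.symm)).toLinearMap ∘ₗ
        (fderiv ℝ Φ xstar : (Fin n → ℝ) →ₗ[ℝ] (Fin s ⊕ Fin d → ℝ))) ≠ 0 := by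
  classical
  -- differentiability of K at xstar
  have hKd : DifferentiableAt ℝ K xstar :=
    (hK.contDiffAt (hΩ.mem_nhds hx)).differentiableAt one_ne_zero
  set A : (Fin n → ℝ) →L[ℝ] (Fin m → ℝ) := fderiv ℝ K xstar with hA
  -- fderiv of f
  have hNc : Continuous N.mulVecLin := LinearMap.continuous_of_finiteDimensional _
  set NL : (Fin m → ℝ) →L[ℝ] (Fin n → ℝ) := { toLinearMap := N.mulVecLin, cont := hNc } with hNL
  have hf' : HasFDerivAt f (NL ∘L A) xstar := by
    have h := NL.hasFDerivAt.comp xstar hKd.hasFDerivAt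
    simpa [hf, hNL, Function.comp_def, Matrix.mulVecLin_apply] using h
  -- fderiv of Φ
  have hN'c : Continuous N'.mulVecLin := LinearMap.continuous_of_finiteDimensional _
  have hWc : Continuous W.mulVecLin := LinearMap.continuous_of_finiteDimensional _
  set C1 : (Fin n → ℝ) →L[ℝ] (Fin s → ℝ) :=
    { toLinearMap := N'.mulVecLin, cont := hN'c } ∘L A with hC1
  set C2 : (Fin n → ℝ) →L[ℝ] (Fin d → ℝ) :=
    { toLinearMap := W.mulVecLin, cont := hWc } with hC2
  set B : (Fin n → ℝ) →L[ℝ] (Fin s ⊕ Fin d → ℝ) :=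
    ContinuousLinearMap.pi (fun i => Sum.elim
      (fun j => (ContinuousLinearMap.proj j).comp C1)
      (fun j => (ContinuousLinearMap.proj j).comp C2) i) with hB
  have hΦ' : HasFDerivAt Φ B xstar := by
    rw [hasFDerivAt_pi']
    rintro (j | j)
    · have h1 : HasFDerivAt (fun x => N' *ᵥ K x) C1 xstar := by
        have h := (({ toLinearMap := N'.mulVecLin, cont := hN'c } :
          (Fin m → ℝ) →L[ℝ] (Fin s → ℝ)).hasFDerivAt).comp xstar hKd.hasFDerivAt
        simpa [hC1, Function.comp_def, Matrix.mulVecLin_apply] using h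
      have h2 : HasFDerivAt (fun x => (N' *ᵥ K x) j)
          ((ContinuousLinearMap.proj j).comp C1) xstar := by
        have h := ((ContinuousLinearMap.proj j :
          (Fin s → ℝ) →L[ℝ] ℝ).hasFDerivAt).comp xstar h1
        simpa [Function.comp_def] using h
      have he : (ContinuousLinearMap.proj (Sum.inl j : Fin s ⊕ Fin d)).comp B
          = (ContinuousLinearMap.proj j).comp C1 := by
        ext v; simp [hB]
      rw [he]
      simpa [hΦ] using h2
    · have h1 : HasFDerivAt (fun x => W *ᵥ x - T) C2 xstar := by
        have h := (C2.hasFDerivAt (x := xstar)).sub_const T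
        simpa [hC2, Matrix.mulVecLin_apply] using h
      have h2 : HasFDerivAt (fun x => (W *ᵥ x - T) j)
          ((ContinuousLinearMap.proj j).comp C2) xstar := by
        have h := ((ContinuousLinearMap.proj j :
          (Fin d → ℝ) →L[ℝ] ℝ).hasFDerivAt).comp xstar h1
        simpa [Function.comp_def] using h
      have he : (ContinuousLinearMap.proj (Sum.inr j : Fin s ⊕ Fin d)).comp B
          = (ContinuousLinearMap.proj j).comp C2 := by
        ext v; simp [hB]
      rw [he]
      simpa [hΦ] using h2
  rw [hf'.fderiv, hΦ'.fderiv]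
  -- linear algebra part
  -- ker of composed map with equiv = ker B
  rw [aux_det_ne_zero_iff_ker, LinearEquiv.ker_comp]
  -- ker B = ker(N' ∘ A) ⊓ ker W
  have hkerB : LinearMap.ker (B : (Fin n → ℝ) →ₗ[ℝ] (Fin s ⊕ Fin d → ℝ))
      = LinearMap.ker (N'.mulVecLin ∘ₗ (A : (Fin n → ℝ) →ₗ[ℝ] (Fin m → ℝ)))
        ⊓ LinearMap.ker W.mulVecLin := by
    ext v
    have hBv : B v = Sum.elim (N' *ᵥ A v) (W *ᵥ v) := by
      funext i; cases i <;> simp [hB, hC1, hC2]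
    simp only [LinearMap.mem_ker, Submodule.mem_inf, ContinuousLinearMap.coe_coe,
      LinearMap.coe_comp, Function.comp_apply, Matrix.mulVecLin_apply, hBv,
      aux_sum_elim_eq_zero]
  rw [hkerB]
  -- ker W.mulVecLin = range N.mulVecLin
  have hWN : ∀ (i : Fin d), W i ᵥ* N = 0 := by
    intro i
    rw [hWspan]
    exact Submodule.subset_span ⟨i, rfl⟩
  have hle : LinearMap.range N.mulVecLin ≤ LinearMap.ker W.mulVecLin := by
    rintro - ⟨y, rfl⟩
    simp only [LinearMap.mem_ker, Matrix.mulVecLin_apply]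
    funext i
    have : W i ⬝ᵥ (N *ᵥ y) = (W i ᵥ* N) ⬝ᵥ y := Matrix.dotProduct_mulVec _ _ _
    simp [Matrix.mulVec, this, hWN i]
  have hrankW : W.rank = d := by simpa using hWli.rank_matrix
  have hdimker : Module.finrank ℝ (LinearMap.ker W.mulVecLin) = s := by
    have h1 := LinearMap.finrank_range_add_finrank_ker W.mulVecLin
    have h2 : Module.finrank ℝ (LinearMap.range W.mulVecLin) = d := by
      rw [← Matrix.rank, hrankW]
    rw [h2] at h1
    have h3 : Module.finrank ℝ (Fin n → ℝ) = n := by simp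
    omega
  have hdimrange : Module.finrank ℝ (LinearMap.range N.mulVecLin) = s := by
    rw [← Matrix.rank, hNrank]
  have hWeq : LinearMap.ker W.mulVecLin = LinearMap.range N.mulVecLin :=
    (Submodule.eq_of_le_of_finrank_eq hle (by rw [hdimker, hdimrange])).symm
  rw [hWeq]
  -- ker (N' ∘ A) = ker (N ∘ A) = ker fderiv f
  have hkereq : LinearMap.ker (N'.mulVecLin ∘ₗ (A : (Fin n → ℝ) →ₗ[ℝ] (Fin m → ℝ)))
      = LinearMap.ker (N.mulVecLin ∘ₗ (A : (Fin n → ℝ) →ₗ[ℝ] (Fin m → ℝ))) := by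
    ext v
    simp only [LinearMap.mem_ker, LinearMap.coe_comp, Function.comp_apply]
    constructor
    · intro h
      have : A v ∈ LinearMap.ker N'.mulVecLin := h
      rw [hker] at this
      exact this
    · intro h
      have : A v ∈ LinearMap.ker N.mulVecLin := h
      rw [← hker] at this
      exact this
  rw [hkereq]
  have hfeq : ((NL ∘L A :
      (Fin n → ℝ) →L[ℝ] (Fin n → ℝ)) : (Fin n → ℝ) →ₗ[ℝ] (Fin n → ℝ))
      = N.mulVecLin ∘ₗ (A : (Fin n → ℝ) →ₗ[ℝ] (Fin m → ℝ)) := rfl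
  rw [hfeq]
end

section
/- Let J ∈ ℝ^{(n₁+s₂+d₂)×n} be a block matrix with row blocks [N₁D₁ - θE_O, N₁D₂], [N₂'D₁, N₂'D₂], [0, W₂], and let P ∈ ℝ^{n₁×n₁} be invertible with P N₁ = [0; N₁'] (first d₁ rows zero, remaining rows N₁') and P E_O = [W₁; A E_O]. If the matrix with row blocks [-θW₁, 0], [N₁'D₁ - θAE_O, N₁'D₂], [N₂'D₁, N₂'D₂], [0, W₂] is non-singular and θ ≠ 0, then J is non-singular (injective as a linear map). -/
open Matrix

theorem stmt13 {n₁ n₂ m s₁ s₂ d₁ d₂ : ℕ} (hdim : d₁ + s₁ = n₁) (θ : ℝ) (hθ : θ ≠ 0)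
    (N₁ : Matrix (Fin n₁) (Fin m) ℝ)
    (N₁' : Matrix (Fin s₁) (Fin m) ℝ)
    (N₂' : Matrix (Fin s₂) (Fin m) ℝ)
    (D₁ : Matrix (Fin m) (Fin n₁) ℝ) (D₂ : Matrix (Fin m) (Fin n₂) ℝ)
    (W₁ : Matrix (Fin d₁) (Fin n₁) ℝ) (W₂ : Matrix (Fin d₂) (Fin n₂) ℝ)
    (E_O : Matrix (Fin n₁) (Fin n₁) ℝ)
    (A : Matrix (Fin s₁) (Fin n₁) ℝ)
    (P : Matrix (Fin n₁) (Fin n₁) ℝ) (hP : IsUnit P.det)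
    (hPN : P * N₁ = (Matrix.fromRows (0 : Matrix (Fin d₁) (Fin m) ℝ) N₁').submatrix
      ((finCongr hdim).symm.trans finSumFinEquiv.symm) id)
    (hPE : P * E_O = (Matrix.fromRows W₁ (A * E_O)).submatrix
      ((finCongr hdim).symm.trans finSumFinEquiv.symm) id)
    (J : Matrix (Fin n₁ ⊕ (Fin s₂ ⊕ Fin d₂)) (Fin n₁ ⊕ Fin n₂) ℝ)
    (hJ : J = Matrix.fromRows
      (Matrix.fromCols (N₁ * D₁ - θ • E_O) (N₁ * D₂))
      (Matrix.fromRows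
        (Matrix.fromCols (N₂' * D₁) (N₂' * D₂))
        (Matrix.fromCols 0 W₂)))
    (M : Matrix (Fin d₁ ⊕ (Fin s₁ ⊕ (Fin s₂ ⊕ Fin d₂))) (Fin n₁ ⊕ Fin n₂) ℝ)
    (hM : M = Matrix.fromRows
      (Matrix.fromCols (-θ • W₁) 0)
      (Matrix.fromRows
        (Matrix.fromCols (N₁' * D₁ - θ • (A * E_O)) (N₁' * D₂))
        (Matrix.fromRows
          (Matrix.fromCols (N₂' * D₁) (N₂' * D₂))
          (Matrix.fromCols 0 W₂))))
    (hMinj : Function.Injective M.mulVec) :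
    Function.Injective J.mulVec := by
  set e : Fin n₁ ≃ (Fin d₁ ⊕ Fin s₁) := (finCongr hdim).symm.trans finSumFinEquiv.symm
  have key : ∀ v : (Fin n₁ ⊕ Fin n₂) → ℝ, J.mulVec v = 0 → v = 0 := by
    intro v hv
    set v₁ : Fin n₁ → ℝ := v ∘ Sum.inl with hv₁
    set v₂ : Fin n₂ → ℝ := v ∘ Sum.inr with hv₂
    have hvel : v = Sum.elim v₁ v₂ := by funext i; cases i <;> rfl
    rw [hJ, hvel] at hv
    rw [Matrix.fromRows_mulVec, Matrix.fromRows_mulVec,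
      Matrix.fromCols_mulVec_sumElim, Matrix.fromCols_mulVec_sumElim,
      Matrix.fromCols_mulVec_sumElim] at hv
    have h1 : (N₁ * D₁ - θ • E_O) *ᵥ v₁ + (N₁ * D₂) *ᵥ v₂ = 0 := by
      funext i; exact congrFun hv (Sum.inl i)
    have h2 : (N₂' * D₁) *ᵥ v₁ + (N₂' * D₂) *ᵥ v₂ = 0 := by
      funext i; exact congrFun hv (Sum.inr (Sum.inl i))
    have h3 : (0 : Matrix (Fin d₂) (Fin n₁) ℝ) *ᵥ v₁ + W₂ *ᵥ v₂ = 0 := by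
      funext i; exact congrFun hv (Sum.inr (Sum.inr i))
    set u : Fin m → ℝ := D₁ *ᵥ v₁ + D₂ *ᵥ v₂ with hu
    have hkey : N₁ *ᵥ u = θ • (E_O *ᵥ v₁) := by
      have h := h1
      rw [Matrix.sub_mulVec, Matrix.smul_mulVec] at h
      rw [hu, Matrix.mulVec_add, Matrix.mulVec_mulVec, Matrix.mulVec_mulVec]
      linear_combination (norm := module) h
    have hPkey : (P * N₁) *ᵥ u = θ • ((P * E_O) *ᵥ v₁) := by
      rw [← Matrix.mulVec_mulVec, ← Matrix.mulVec_mulVec, hkey, Matrix.mulVec_smul]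
    rw [hPN, hPE] at hPkey
    have hcomp : ∀ i : Fin d₁ ⊕ Fin s₁,
        (Matrix.fromRows (0 : Matrix (Fin d₁) (Fin m) ℝ) N₁' *ᵥ u) i
          = θ • (Matrix.fromRows W₁ (A * E_O) *ᵥ v₁) i := by
      intro i
      have h := congrFun hPkey (e.symm i)
      simpa [Matrix.mulVec, Matrix.submatrix_apply] using h
    have hW₁ : W₁ *ᵥ v₁ = 0 := by
      have h0 : θ • (W₁ *ᵥ v₁) = 0 := by
        funext i
        have h := (hcomp (Sum.inl i)).symm
        simpa [Matrix.fromRows_mulVec] using h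
      rcases smul_eq_zero.mp h0 with h | h
      · exact absurd h hθ
      · exact h
    have hN₁' : N₁' *ᵥ u = θ • ((A * E_O) *ᵥ v₁) := by
      funext i
      have h := hcomp (Sum.inr i)
      simpa [Matrix.fromRows_mulVec] using h
    have ha : (-θ • W₁) *ᵥ v₁ + (0 : Matrix (Fin d₁) (Fin n₂) ℝ) *ᵥ v₂ = 0 := by
      rw [Matrix.smul_mulVec, hW₁, Matrix.zero_mulVec]
      simp
    have hb : (N₁' * D₁ - θ • (A * E_O)) *ᵥ v₁ + (N₁' * D₂) *ᵥ v₂ = 0 := by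
      have h5 : (N₁' * D₁) *ᵥ v₁ + (N₁' * D₂) *ᵥ v₂ = θ • ((A * E_O) *ᵥ v₁) := by
        rw [← hN₁', hu, Matrix.mulVec_add, Matrix.mulVec_mulVec, Matrix.mulVec_mulVec]
      rw [Matrix.sub_mulVec, Matrix.smul_mulVec]
      linear_combination (norm := module) h5
    have hd : (0 : Matrix (Fin d₂) (Fin n₁) ℝ) *ᵥ v₁ + W₂ *ᵥ v₂ = 0 := h3
    have hM0 : M.mulVec (Sum.elim v₁ v₂) = 0 := by
      rw [hM, Matrix.fromRows_mulVec, Matrix.fromRows_mulVec, Matrix.fromRows_mulVec,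
        Matrix.fromCols_mulVec_sumElim, Matrix.fromCols_mulVec_sumElim,
        Matrix.fromCols_mulVec_sumElim, Matrix.fromCols_mulVec_sumElim,
        ha, hb, h2, hd]
      funext i
      rcases i with i | i
      · simp
      rcases i with i | i
      · simp
      rcases i with i | i <;> simp
    have h0 : Sum.elim v₁ v₂ = 0 := by
      apply hMinj
      rw [hM0, Matrix.mulVec_zero]
    rw [hvel, h0]
  intro x y hxy
  have hz : J.mulVec (x - y) = 0 := by
    rw [Matrix.mulVec_sub, hxy, sub_self]
  exact sub_eq_zero.mp (key _ hz)
end
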